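/- Let G be a finite group with |G| = n ≥ 2 and S = S⁻¹ ⊆ G a symmetric set with |S| = d ≥ 1, and let h denote the vertex Cheeger constant of the Cayley graph C(G,S). Then the second largest eigenvalue t₂ of the normalized adjacency matrix T of C(G,S) satisfies t₂ ≤ 1 - h² / (2d²); equivalently, the second smallest eigenvalue λ₂ of the normalized Laplacian L = I - T satisfies λ₂ ≥ h² / (2d²). -/

import Mathlib

open Finset
open scoped Pointwise

private lemma abel_aux (u : ℕ → ℝ) (k : ℕ) :
    ∑ m ∈ Finset.range k, ((m : ℝ) + 1) * (u m - u (m + 1)) =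
      (∑ m ∈ Finset.range k, u m) - k * u k := by
  induction k with
  | zero => simp
  | succ k ih =>
      rw [Finset.sum_range_succ, Finset.sum_range_succ, ih]
      push_cast
      ring

private lemma tele_le (u : ℕ → ℝ) (n i j : ℕ) (hij : i ≤ j) (hjn : j < n) :
    u i - u j = ∑ m ∈ Finset.range n,
      (u m - u (m + 1)) * (if (i ≤ m ∧ ¬ j ≤ m) ∨ (j ≤ m ∧ ¬ i ≤ m) then 1 else 0) := by
  have h1 : ∑ m ∈ Finset.range n,
      (u m - u (m + 1)) * (if (i ≤ m ∧ ¬ j ≤ m) ∨ (j ≤ m ∧ ¬ i ≤ m) then 1 else 0)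
      = ∑ m ∈ (Finset.range n).filter (fun m => (i ≤ m ∧ ¬ j ≤ m) ∨ (j ≤ m ∧ ¬ i ≤ m)),
          (u m - u (m + 1)) := by
    rw [Finset.sum_filter]
    refine Finset.sum_congr rfl fun m _ => ?_
    by_cases hc : (i ≤ m ∧ ¬ j ≤ m) ∨ (j ≤ m ∧ ¬ i ≤ m) <;> simp [hc]
  have h2 : (Finset.range n).filter (fun m => (i ≤ m ∧ ¬ j ≤ m) ∨ (j ≤ m ∧ ¬ i ≤ m))
      = Finset.Ico i j := by
    ext m
    simp only [Finset.mem_filter, Finset.mem_range, Finset.mem_Ico]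
    omega
  rw [h1, h2, Finset.sum_Ico_eq_sum_range]
  have h3 : ∑ k ∈ Finset.range (j - i), (u (i + k) - u (i + k + 1)) = u (i + 0) - u (i + (j - i)) :=
    Finset.sum_range_sub' (fun k => u (i + k)) (j - i)
  rw [h3]
  congr 2 <;> omega

private lemma tele_abs (u : ℕ → ℝ) (hu : Antitone u) (n i j : ℕ) (hin : i < n) (hjn : j < n) :
    |u i - u j| = ∑ m ∈ Finset.range n,
      (u m - u (m + 1)) * (if (i ≤ m ∧ ¬ j ≤ m) ∨ (j ≤ m ∧ ¬ i ≤ m) then 1 else 0) := by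
  rcases le_total i j with hij | hij
  · rw [abs_of_nonneg (by linarith [hu hij] : (0:ℝ) ≤ u i - u j)]
    exact tele_le u n i j hij hjn
  · rw [abs_of_nonpos (by linarith [hu hij] : u i - u j ≤ (0:ℝ)), neg_sub]
    rw [tele_le u n j i hij hin]
    refine Finset.sum_congr rfl fun m _ => ?_
    congr 1
    refine if_congr ?_ rfl rfl
    tauto

private lemma cross_card {G : Type*} [Group G] [Fintype G] [DecidableEq G]
    (S A : Finset G) (hSsymm : S⁻¹ = S) :
    2 * (((S * A) \ A).card) ≤
      ((Finset.univ ×ˢ Finset.univ).filter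
        (fun p : G × G => p.2 * p.1⁻¹ ∈ S ∧
          ((p.1 ∈ A ∧ p.2 ∉ A) ∨ (p.1 ∉ A ∧ p.2 ∈ A)))).card := by
  classical
  set F1 := (Finset.univ ×ˢ Finset.univ).filter
      (fun p : G × G => (p.2 * p.1⁻¹ ∈ S ∧ p.1 ∈ A ∧ p.2 ∉ A)) with hF1
  set F2 := (Finset.univ ×ˢ Finset.univ).filter
      (fun p : G × G => (p.2 * p.1⁻¹ ∈ S ∧ p.1 ∉ A ∧ p.2 ∈ A)) with hF2
  have hunion : (Finset.univ ×ˢ Finset.univ).filter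
      (fun p : G × G => p.2 * p.1⁻¹ ∈ S ∧
        ((p.1 ∈ A ∧ p.2 ∉ A) ∨ (p.1 ∉ A ∧ p.2 ∈ A))) = F1 ∪ F2 := by
    ext p
    simp only [hF1, hF2, Finset.mem_union, Finset.mem_filter]
    tauto
  have hdisj : Disjoint F1 F2 := by
    rw [Finset.disjoint_left]
    intro p hp1 hp2
    simp only [hF1, hF2, Finset.mem_filter] at hp1 hp2
    tauto
  have hc1 : ((S * A) \ A).card ≤ F1.card := by
    calc ((S * A) \ A).card ≤ (F1.image Prod.snd).card := by
          apply Finset.card_le_card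
          intro z hz
          rw [Finset.mem_sdiff] at hz
          obtain ⟨hzSA, hzA⟩ := hz
          rw [Finset.mem_mul] at hzSA
          obtain ⟨s, hs, a, ha, rfl⟩ := hzSA
          refine Finset.mem_image.2 ⟨(a, s * a), ?_, rfl⟩
          simp only [hF1, Finset.mem_filter, Finset.mem_product, Finset.mem_univ, true_and]
          refine ⟨by simpa using hs, ha, hzA⟩
      _ ≤ F1.card := Finset.card_image_le
  have hc2 : ((S * A) \ A).card ≤ F2.card := by
    calc ((S * A) \ A).card ≤ (F2.image Prod.fst).card := by
          apply Finset.card_le_card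
          intro z hz
          rw [Finset.mem_sdiff] at hz
          obtain ⟨hzSA, hzA⟩ := hz
          rw [Finset.mem_mul] at hzSA
          obtain ⟨s, hs, a, ha, rfl⟩ := hzSA
          refine Finset.mem_image.2 ⟨(s * a, a), ?_, rfl⟩
          simp only [hF2, Finset.mem_filter, Finset.mem_product, Finset.mem_univ, true_and]
          refine ⟨?_, hzA, ha⟩
          have : a * (s * a)⁻¹ = s⁻¹ := by group
          rw [this, ← hSsymm, Finset.mem_inv']
          simpa using hs
      _ ≤ F2.card := Finset.card_image_le
  rw [hunion, Finset.card_union_of_disjoint hdisj]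
  omega

private lemma cheeger_key {G : Type*} [Group G] [Fintype G] [DecidableEq G]
    (S : Finset G) (d : ℕ) (hd1 : 1 ≤ d) (hSsymm : S⁻¹ = S)
    (hdeg : ∀ x : G, (Finset.univ.filter (fun y => y * x⁻¹ ∈ S)).card = d)
    (hdeg' : ∀ y : G, (Finset.univ.filter (fun x => y * x⁻¹ ∈ S)).card = d)
    (h : ℝ) (hh0 : 0 ≤ h)
    (hhle : ∀ A : Finset G, A.Nonempty → 2 * (A.card : ℝ) ≤ (Fintype.card G : ℝ) →
      h * A.card ≤ (((S * A) \ A).card : ℝ))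
    (t : ℝ) (f : G → ℝ)
    (hf : ∀ x : G, ∑ y : G, (if y * x⁻¹ ∈ S then (1:ℝ) else 0) * f y = t * d * f x)
    (hP : ∃ x, 0 < f x)
    (hPcard : 2 * ((Finset.univ.filter (fun x => 0 < f x)).card : ℝ) ≤ (Fintype.card G : ℝ)) :
    t ≤ 1 - h ^ 2 / (2 * (d : ℝ) ^ 2) := by
  classical
  set nG := Fintype.card G with hnG
  have hd0 : (0:ℝ) < d := by exact_mod_cast hd1
  set g : G → ℝ := fun x => max (f x) 0 with hg
  have hg0 : ∀ x, 0 ≤ g x := fun x => le_max_right _ _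
  have hgpos : ∀ x, 0 < g x → 0 < f x := by
    intro x hx
    by_contra hc
    push_neg at hc
    have : g x = 0 := max_eq_right hc
    linarith
  set E := (Finset.univ ×ˢ Finset.univ).filter (fun p : G × G => p.2 * p.1⁻¹ ∈ S) with hE
  set N := ∑ x : G, g x ^ 2 with hN
  set Q := ∑ p ∈ E, (g p.1 - g p.2) ^ 2 with hQ
  set B := ∑ p ∈ E, |g p.1 ^ 2 - g p.2 ^ 2| with hB
  -- generic conversion of sums over E to double sums
  have sumE : ∀ F : G × G → ℝ, ∑ p ∈ E, F p
      = ∑ x : G, ∑ y : G, (if y * x⁻¹ ∈ S then (1:ℝ) else 0) * F (x, y) := by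
    intro F
    rw [hE, Finset.sum_filter, Finset.sum_product]
    refine Finset.sum_congr rfl fun x _ => Finset.sum_congr rfl fun y _ => ?_
    by_cases hc : y * x⁻¹ ∈ S <;> simp [hc]
  have hrow : ∀ x : G, ∑ y : G, (if y * x⁻¹ ∈ S then (1:ℝ) else 0) = (d : ℝ) := by
    intro x
    rw [Finset.sum_boole]
    exact_mod_cast congrArg Nat.cast (hdeg x)
  have hcol : ∀ y : G, ∑ x : G, (if y * x⁻¹ ∈ S then (1:ℝ) else 0) = (d : ℝ) := by
    intro y
    rw [Finset.sum_boole]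
    exact_mod_cast congrArg Nat.cast (hdeg' y)
  have hsum1 : ∑ p ∈ E, g p.1 ^ 2 = d * N := by
    rw [sumE, hN, Finset.mul_sum]
    refine Finset.sum_congr rfl fun x _ => ?_
    dsimp only
    rw [← Finset.sum_mul, hrow]
  have hsum2 : ∑ p ∈ E, g p.2 ^ 2 = d * N := by
    rw [sumE, Finset.sum_comm, hN, Finset.mul_sum]
    refine Finset.sum_congr rfl fun y _ => ?_
    dsimp only
    rw [← Finset.sum_mul, hcol]
  have hN0 : 0 < N := by
    obtain ⟨x0, hx0⟩ := hP
    have h1 : 0 < g x0 ^ 2 := by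
      have : 0 < g x0 := lt_of_lt_of_le hx0 (le_max_left _ _)
      positivity
    have h2 : g x0 ^ 2 ≤ N :=
      Finset.single_le_sum (fun x _ => sq_nonneg (g x)) (Finset.mem_univ x0)
    linarith
  -- Step 1: quadratic form bound
  have hTg : t * d * N ≤ ∑ p ∈ E, g p.1 * g p.2 := by
    rw [sumE]
    have : ∀ x : G, t * d * g x ^ 2 ≤ ∑ y : G,
        (if y * x⁻¹ ∈ S then (1:ℝ) else 0) * (g x * g y) := by
      intro x
      have hfac : ∑ y : G, (if y * x⁻¹ ∈ S then (1:ℝ) else 0) * (g x * g y)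
          = g x * ∑ y : G, (if y * x⁻¹ ∈ S then (1:ℝ) else 0) * g y := by
        rw [Finset.mul_sum]
        exact Finset.sum_congr rfl fun y _ => by ring
      rw [hfac]
      by_cases hx : 0 < f x
      · have hgx : g x = f x := max_eq_left hx.le
        have hmono : ∑ y : G, (if y * x⁻¹ ∈ S then (1:ℝ) else 0) * f y
            ≤ ∑ y : G, (if y * x⁻¹ ∈ S then (1:ℝ) else 0) * g y := by
          refine Finset.sum_le_sum fun y _ => ?_
          by_cases hc : y * x⁻¹ ∈ S
          · simpa [hc, hg] using le_max_left (f y) 0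
          · simp [hc]
        rw [hf x] at hmono
        calc t * d * g x ^ 2 = g x * (t * d * f x) := by rw [hgx]; ring
          _ ≤ g x * ∑ y : G, (if y * x⁻¹ ∈ S then (1:ℝ) else 0) * g y := by
              apply mul_le_mul_of_nonneg_left hmono (hg0 x)
      · have hgx : g x = 0 := max_eq_right (not_lt.1 hx)
        rw [hgx]
        simp
    calc t * d * N = ∑ x : G, t * d * g x ^ 2 := by rw [hN, Finset.mul_sum]
      _ ≤ _ := Finset.sum_le_sum fun x _ => this x
  have hQle : Q ≤ 2 * d * (1 - t) * N := by
    have hexp : Q = (∑ p ∈ E, g p.1 ^ 2) + (∑ p ∈ E, g p.2 ^ 2)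
        - 2 * ∑ p ∈ E, g p.1 * g p.2 := by
      rw [hQ, ← Finset.sum_add_distrib, Finset.mul_sum, ← Finset.sum_sub_distrib]
      exact Finset.sum_congr rfl fun p _ => by ring
    rw [hexp, hsum1, hsum2]
    nlinarith [hTg]
  have hQ0 : 0 ≤ Q := Finset.sum_nonneg fun p _ => sq_nonneg _
  -- Step 2: Cauchy-Schwarz
  have hM : ∑ p ∈ E, (g p.1 + g p.2) ^ 2 ≤ 4 * d * N := by
    have : ∀ p ∈ E, (g p.1 + g p.2) ^ 2 ≤ 2 * g p.1 ^ 2 + 2 * g p.2 ^ 2 := by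
      intro p _
      nlinarith [sq_nonneg (g p.1 - g p.2)]
    calc ∑ p ∈ E, (g p.1 + g p.2) ^ 2 ≤ ∑ p ∈ E, (2 * g p.1 ^ 2 + 2 * g p.2 ^ 2) :=
          Finset.sum_le_sum this
      _ = 2 * (∑ p ∈ E, g p.1 ^ 2) + 2 * (∑ p ∈ E, g p.2 ^ 2) := by
          rw [Finset.sum_add_distrib, Finset.mul_sum, Finset.mul_sum]
      _ ≤ 4 * d * N := by rw [hsum1, hsum2]; ring_nf; rfl
  have hB2 : B ^ 2 ≤ Q * (4 * d * N) := by
    have hBrw : B = ∑ p ∈ E, |g p.1 - g p.2| * (g p.1 + g p.2) := by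
      refine Finset.sum_congr rfl fun p _ => ?_
      rw [show g p.1 ^ 2 - g p.2 ^ 2 = (g p.1 - g p.2) * (g p.1 + g p.2) by ring, abs_mul,
        abs_of_nonneg (by positivity : (0:ℝ) ≤ g p.1 + g p.2)]
    have hcs := Finset.sum_mul_sq_le_sq_mul_sq E (fun p => |g p.1 - g p.2|)
      (fun p => g p.1 + g p.2)
    simp only [sq_abs] at hcs
    rw [hBrw]
    calc (∑ p ∈ E, |g p.1 - g p.2| * (g p.1 + g p.2)) ^ 2
        ≤ (∑ p ∈ E, (g p.1 - g p.2) ^ 2) * ∑ p ∈ E, (g p.1 + g p.2) ^ 2 := hcs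
      _ ≤ Q * (4 * d * N) := by
          rw [← hQ]
          exact mul_le_mul_of_nonneg_left hM hQ0
  -- Step 3: coarea bound  B ≥ 2 h N
  have hcoarea : 2 * h * N ≤ B := by
    obtain ⟨π, hπ⟩ : ∃ π : Fin nG ≃ G, Antitone (fun i : Fin nG => g (π i) ^ 2) := by
      let e0 : Fin nG ≃ G := (Fintype.equivFin G).symm
      let w : Fin nG → ℝ := fun i => -(g (e0 i) ^ 2)
      refine ⟨(Tuple.sort w).trans e0, ?_⟩
      intro i j hij
      have hmono := Tuple.monotone_sort w hij
      simp only [Function.comp, w] at hmono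
      simpa using hmono
    set r : G → ℕ := fun x => ((π.symm x : Fin nG) : ℕ) with hr
    have hrlt : ∀ x, r x < nG := fun x => (π.symm x).isLt
    set u : ℕ → ℝ := fun m => if hm : m < nG then g (π ⟨m, hm⟩) ^ 2 else 0 with hu
    have hu0 : ∀ m, 0 ≤ u m := by
      intro m
      rw [hu]
      dsimp only
      split
      · exact sq_nonneg _
      · exact le_rfl
    have huanti : Antitone u := by
      apply antitone_nat_of_succ_le
      intro m
      by_cases h1 : m + 1 < nG
      · have h0 : m < nG := by omega
        have hle := hπ (show (⟨m, h0⟩ : Fin nG) ≤ ⟨m + 1, h1⟩ from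
          Fin.mk_le_mk.mpr (Nat.le_succ m))
        simp only [hu]
        rw [dif_pos h1, dif_pos h0]
        exact hle
      · simp only [hu]
        rw [dif_neg h1]
        split
        · exact sq_nonneg _
        · exact le_rfl
    have hur : ∀ x : G, u (r x) = g x ^ 2 := by
      intro x
      simp only [hu, hr]
      rw [dif_pos (hrlt x)]
      congr 1
      rw [Fin.eta, Equiv.apply_symm_apply]
    have hNu : N = ∑ m ∈ Finset.range nG, u m := by
      rw [hN, ← Equiv.sum_comp π (fun x => g x ^ 2), ← Fin.sum_univ_eq_sum_range u nG]
      refine Finset.sum_congr rfl fun i _ => ?_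
      simp only [hu]
      rw [dif_pos i.isLt, Fin.eta]
    have hux : u nG = 0 := by simp [hu]
    have hNabel : ∑ m ∈ Finset.range nG, ((m : ℝ) + 1) * (u m - u (m + 1)) = N := by
      rw [abel_aux, hux, hNu]
      ring
    set Am : ℕ → Finset G := fun m => Finset.univ.filter (fun x => r x ≤ m) with hAm
    set cF : ℕ → ℕ := fun m => ((Finset.univ ×ˢ Finset.univ).filter
        (fun p : G × G => p.2 * p.1⁻¹ ∈ S ∧
          ((p.1 ∈ Am m ∧ p.2 ∉ Am m) ∨ (p.1 ∉ Am m ∧ p.2 ∈ Am m)))).card with hcF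
    have hBsum : B = ∑ m ∈ Finset.range nG, (u m - u (m + 1)) * (cF m : ℝ) := by
      rw [hB]
      have step1 : ∀ p ∈ E, |g p.1 ^ 2 - g p.2 ^ 2|
          = ∑ m ∈ Finset.range nG, (u m - u (m + 1)) *
            (if (r p.1 ≤ m ∧ ¬ r p.2 ≤ m) ∨ (r p.2 ≤ m ∧ ¬ r p.1 ≤ m) then 1 else 0) := by
        intro p _
        rw [← hur p.1, ← hur p.2]
        exact tele_abs u huanti nG (r p.1) (r p.2) (hrlt p.1) (hrlt p.2)
      rw [Finset.sum_congr rfl step1, Finset.sum_comm]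
      refine Finset.sum_congr rfl fun m _ => ?_
      rw [← Finset.mul_sum]
      congr 1
      rw [Finset.sum_boole]
      norm_cast
      simp only [hcF]
      rw [hE, Finset.filter_filter]
      congr 1
      apply Finset.filter_congr
      intro p _
      simp only [hAm, Finset.mem_filter, Finset.mem_univ, true_and]
      tauto
    have hAmcard : ∀ m, m < nG → (Am m).card = m + 1 := by
      intro m hm
      have hcb : (Am m).card = (Finset.range (m + 1)).card := by
        apply Finset.card_nbij (i := r)
        · intro x hx
          simp only [hAm, Finset.mem_coe, Finset.mem_filter, Finset.mem_univ, true_and] at hx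
          rw [Finset.mem_coe, Finset.mem_range]
          omega
        · intro x _ y _ hxy
          simp only [hr] at hxy
          exact π.symm.injective (Fin.val_injective hxy)
        · intro b hb
          simp only [Finset.coe_range, Set.mem_Iio] at hb
          have hbn : b < nG := by omega
          refine ⟨π ⟨b, hbn⟩, ?_, ?_⟩
          · simp only [hAm, Finset.coe_filter, Set.mem_setOf_eq, Finset.mem_univ, true_and, hr]
            simp only [Equiv.symm_apply_apply]
            omega
          · simp only [hr, Equiv.symm_apply_apply]
      rw [hcb, Finset.card_range]
    have hterm : ∀ m ∈ Finset.range nG,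
        2 * h * (((m : ℝ) + 1) * (u m - u (m + 1))) ≤ (u m - u (m + 1)) * (cF m : ℝ) := by
      intro m hmr
      rw [Finset.mem_range] at hmr
      have hδ : 0 ≤ u m - u (m + 1) := by
        have := huanti (Nat.le_succ m)
        linarith
      rcases eq_or_lt_of_le hδ with hδ0 | hδpos
      · rw [← hδ0]
        simp
      · have hum : 0 < u m := by
          have := hu0 (m + 1)
          linarith
        have hsub : Am m ⊆ Finset.univ.filter (fun x => 0 < f x) := by
          intro x hx
          rw [hAm, Finset.mem_filter] at hx
          have h1 : u m ≤ u (r x) := huanti hx.2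
          have h2 : 0 < g x ^ 2 := by rw [← hur x]; linarith
          have h3 : g x ≠ 0 := by
            intro e
            rw [e] at h2
            simp at h2
          have h4 : 0 < g x := lt_of_le_of_ne (hg0 x) (Ne.symm h3)
          rw [Finset.mem_filter]
          exact ⟨Finset.mem_univ _, hgpos x h4⟩
        have hcc : (Am m).card ≤ (Finset.univ.filter (fun x => 0 < f x)).card :=
          Finset.card_le_card hsub
        have hcard2 : 2 * ((Am m).card : ℝ) ≤ (nG : ℝ) := by
          have hcc' : ((Am m).card : ℝ) ≤ ((Finset.univ.filter (fun x => 0 < f x)).card : ℝ) := by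
            exact_mod_cast hcc
          linarith [hPcard]
        have hne : (Am m).Nonempty := Finset.card_pos.mp (by rw [hAmcard m hmr]; omega)
        have hh1 : h * ((Am m).card : ℝ) ≤ (((S * Am m) \ Am m).card : ℝ) := hhle (Am m) hne hcard2
        have hcross := cross_card S (Am m) hSsymm
        have hcross' : 2 * ((((S * Am m) \ Am m).card : ℕ) : ℝ) ≤ (cF m : ℝ) := by
          rw [hcF]
          exact_mod_cast hcross
        have hfinal : 2 * h * ((m : ℝ) + 1) ≤ (cF m : ℝ) := by
          have hAc : ((Am m).card : ℝ) = (m : ℝ) + 1 := by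
            rw [hAmcard m hmr]
            push_cast
            ring
          rw [hAc] at hh1
          linarith
        calc 2 * h * (((m : ℝ) + 1) * (u m - u (m + 1)))
            = (u m - u (m + 1)) * (2 * h * ((m : ℝ) + 1)) := by ring
          _ ≤ (u m - u (m + 1)) * (cF m : ℝ) := mul_le_mul_of_nonneg_left hfinal hδ
    calc 2 * h * N = ∑ m ∈ Finset.range nG, 2 * h * (((m : ℝ) + 1) * (u m - u (m + 1))) := by
          rw [← hNabel, Finset.mul_sum]
      _ ≤ ∑ m ∈ Finset.range nG, (u m - u (m + 1)) * (cF m : ℝ) := Finset.sum_le_sum hterm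
      _ = B := hBsum.symm
  -- Final arithmetic
  have hfin : h ^ 2 ≤ 2 * d ^ 2 * (1 - t) := by
    have h1 : (2 * h * N) ^ 2 ≤ B ^ 2 :=
      pow_le_pow_left₀ (by positivity) hcoarea 2
    have h2 : Q * (4 * d * N) ≤ (2 * d * (1 - t) * N) * (4 * d * N) :=
      mul_le_mul_of_nonneg_right hQle (by positivity)
    have hmm : h ^ 2 * (4 * N ^ 2) ≤ (2 * d ^ 2 * (1 - t)) * (4 * N ^ 2) := by
      calc h ^ 2 * (4 * N ^ 2) = (2 * h * N) ^ 2 := by ring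
        _ ≤ B ^ 2 := h1
        _ ≤ Q * (4 * d * N) := hB2
        _ ≤ (2 * d * (1 - t) * N) * (4 * d * N) := h2
        _ = (2 * d ^ 2 * (1 - t)) * (4 * N ^ 2) := by ring
    exact le_of_mul_le_mul_right hmm (by positivity)
  have h2d : (0:ℝ) < 2 * (d:ℝ) ^ 2 := by positivity
  have hfrac : h ^ 2 / (2 * (d:ℝ) ^ 2) ≤ 1 - t := by
    rw [div_le_iff₀ h2d]
    have hrr : (1 - t) * (2 * (d:ℝ) ^ 2) = 2 * (d:ℝ) ^ 2 * (1 - t) := by ring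
    linarith [hfin]
  linarith

/-- Let `G` be a finite group with `|G| = n ≥ 2`, `S = S⁻¹ ⊆ G` symmetric
with `|S| = d ≥ 1`, and `h` the vertex Cheeger constant of `C(G,S)`. Then the second largest
eigenvalue `t₂` of the normalized adjacency matrix `T` satisfies `t₂ ≤ 1 - h²/(2d²)`;
equivalently `λ₂ ≥ h²/(2d²)`. Since `T` is symmetric and the all-ones vector is a
`1`-eigenvector, `t₂ ≤ c` is expressed as: every eigenvalue of `T` admitting an eigenvector
orthogonal to the constants is at most `c`. -/
theorem discrete_cheeger_for_cayley {G : Type*} [Group G] [Fintype G] [DecidableEq G]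
    (n : ℕ) (hn : Fintype.card G = n) (hn2 : 2 ≤ n)
    (S : Finset G) (d : ℕ) (hd : S.card = d) (hd1 : 1 ≤ d) (hSsymm : S⁻¹ = S)
    (h : ℝ)
    (hh : h = sInf {r : ℝ | ∃ A : Finset G, A.Nonempty ∧
      (A.card : ℝ) ≤ (Fintype.card G : ℝ) / 2 ∧
      r = (((S * A) \ A).card : ℝ) / A.card}) :
    ∀ t : ℝ, ∀ v : G → ℝ, v ≠ 0 → (∑ x : G, v x) = 0 →
      (Matrix.of fun x y : G => if y * x⁻¹ ∈ S then (1 : ℝ) / d else 0).mulVec v = t • v →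
      t ≤ 1 - h ^ 2 / (2 * (d : ℝ) ^ 2) := by
  intro t v hv0 hvsum hveig
  classical
  have hd0 : (0:ℝ) < d := by exact_mod_cast hd1
  -- degrees
  have hdeg : ∀ x : G, (Finset.univ.filter (fun y => y * x⁻¹ ∈ S)).card = d := by
    intro x
    have himg : Finset.univ.filter (fun y => y * x⁻¹ ∈ S) = S.image (fun s => s * x) := by
      ext y
      simp only [Finset.mem_filter, Finset.mem_univ, true_and, Finset.mem_image]
      constructor
      · intro hy
        exact ⟨y * x⁻¹, hy, by group⟩
      · rintro ⟨s, hs, rfl⟩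
        simpa using hs
    rw [himg, Finset.card_image_of_injective _ (mul_left_injective x)]
    exact hd
  have hdeg' : ∀ y : G, (Finset.univ.filter (fun x => y * x⁻¹ ∈ S)).card = d := by
    intro y
    have himg : Finset.univ.filter (fun x => y * x⁻¹ ∈ S) = S.image (fun s => s⁻¹ * y) := by
      ext x
      simp only [Finset.mem_filter, Finset.mem_univ, true_and, Finset.mem_image]
      constructor
      · intro hx
        refine ⟨y * x⁻¹, hx, by group⟩
      · rintro ⟨s, hs, rfl⟩
        have : y * (s⁻¹ * y)⁻¹ = s := by group
        rw [this]
        exact hs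
    rw [himg, Finset.card_image_of_injective _
      (fun a b hab => inv_injective (mul_left_injective y hab))]
    exact hd
  -- Cheeger constant facts
  set RS := {r : ℝ | ∃ A : Finset G, A.Nonempty ∧
      (A.card : ℝ) ≤ (Fintype.card G : ℝ) / 2 ∧
      r = (((S * A) \ A).card : ℝ) / A.card} with hRS
  have hRSne : RS.Nonempty := by
    refine ⟨(((S * ({1} : Finset G)) \ ({1} : Finset G)).card : ℝ) / (({1} : Finset G).card : ℝ),
      ({1} : Finset G), ⟨1, Finset.mem_singleton_self 1⟩, ?_, rfl⟩
    rw [Finset.card_singleton, hn]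
    have : (2:ℝ) ≤ n := by exact_mod_cast hn2
    push_cast
    linarith
  have hbdd : BddBelow RS := by
    refine ⟨0, fun r hr => ?_⟩
    obtain ⟨A, hA, _, rfl⟩ := hr
    positivity
  have hh0 : 0 ≤ h := by
    rw [hh]
    refine le_csInf hRSne fun r hr => ?_
    obtain ⟨A, hA, _, rfl⟩ := hr
    positivity
  have hhle : ∀ A : Finset G, A.Nonempty → 2 * (A.card : ℝ) ≤ (Fintype.card G : ℝ) →
      h * A.card ≤ (((S * A) \ A).card : ℝ) := by
    intro A hA hAc
    have hmem : (((S * A) \ A).card : ℝ) / A.card ∈ RS := ⟨A, hA, by linarith, rfl⟩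
    have hle : h ≤ (((S * A) \ A).card : ℝ) / A.card := by
      rw [hh]
      exact csInf_le hbdd hmem
    have hApos : (0:ℝ) < A.card := by
      exact_mod_cast Finset.card_pos.mpr hA
    rw [le_div_iff₀ hApos] at hle
    exact hle
  -- eigen equation in sum form
  have hfeig : ∀ x : G, ∑ y : G, (if y * x⁻¹ ∈ S then (1:ℝ) else 0) * v y = t * d * v x := by
    intro x
    have hx := congrFun hveig x
    simp only [Matrix.mulVec, dotProduct, Matrix.of_apply, Pi.smul_apply,
      smul_eq_mul] at hx
    have h2 : ∑ y : G, (if y * x⁻¹ ∈ S then (1:ℝ) else 0) * v y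
        = d * ∑ y : G, (if y * x⁻¹ ∈ S then (1:ℝ)/d else 0) * v y := by
      rw [Finset.mul_sum]
      refine Finset.sum_congr rfl fun y _ => ?_
      by_cases hc : y * x⁻¹ ∈ S
      · simp only [hc, if_true]
        field_simp
      · simp [hc]
    rw [h2, hx]
    ring
  -- sign split
  set P := Finset.univ.filter (fun x => 0 < v x) with hP
  set Np := Finset.univ.filter (fun x => v x < 0) with hNp
  have hPne : P.Nonempty := by
    by_contra hc
    rw [Finset.not_nonempty_iff_eq_empty] at hc
    have hall : ∀ x ∈ Finset.univ, v x ≤ 0 := by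
      intro x _
      by_contra hvx
      push_neg at hvx
      have hmem : x ∈ P := by rw [hP, Finset.mem_filter]; exact ⟨Finset.mem_univ _, hvx⟩
      rw [hc] at hmem
      simp at hmem
    have hz := (Finset.sum_eq_zero_iff_of_nonpos hall).mp hvsum
    exact hv0 (funext fun x => hz x (Finset.mem_univ x))
  have hNpne : Np.Nonempty := by
    by_contra hc
    rw [Finset.not_nonempty_iff_eq_empty] at hc
    have hall : ∀ x ∈ Finset.univ, 0 ≤ v x := by
      intro x _
      by_contra hvx
      push_neg at hvx
      have hmem : x ∈ Np := by rw [hNp, Finset.mem_filter]; exact ⟨Finset.mem_univ _, hvx⟩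
      rw [hc] at hmem
      simp at hmem
    have hz := (Finset.sum_eq_zero_iff_of_nonneg hall).mp hvsum
    exact hv0 (funext fun x => hz x (Finset.mem_univ x))
  have hdisj : Disjoint P Np := by
    rw [Finset.disjoint_left]
    intro a ha hb
    rw [hP, Finset.mem_filter] at ha
    rw [hNp, Finset.mem_filter] at hb
    linarith [ha.2, hb.2]
  have hsplit : P.card + Np.card ≤ n := by
    rw [← Finset.card_union_of_disjoint hdisj, ← hn, ← Finset.card_univ]
    exact Finset.card_le_card (Finset.subset_univ _)
  rcases (by omega : 2 * P.card ≤ n ∨ 2 * Np.card ≤ n) with hca | hca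
  · refine cheeger_key S d hd1 hSsymm hdeg hdeg' h hh0 hhle t v hfeig ?_ ?_
    · obtain ⟨x, hx⟩ := hPne
      rw [hP, Finset.mem_filter] at hx
      exact ⟨x, hx.2⟩
    · rw [hn]
      exact_mod_cast hca
  · have hfeig' : ∀ x : G, ∑ y : G, (if y * x⁻¹ ∈ S then (1:ℝ) else 0) * (-v y)
        = t * d * (-v x) := by
      intro x
      simp only [mul_neg, Finset.sum_neg_distrib, hfeig x]
    refine cheeger_key S d hd1 hSsymm hdeg hdeg' h hh0 hhle t (fun x => -v x) hfeig' ?_ ?_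
    · obtain ⟨x, hx⟩ := hNpne
      rw [hNp, Finset.mem_filter] at hx
      exact ⟨x, by simpa using neg_pos.mpr hx.2⟩
    · have hfilter : Finset.univ.filter (fun x => 0 < -v x) = Np := by
        rw [hNp]
        apply Finset.filter_congr
        intro x _
        simp [neg_pos]
      rw [hfilter, hn]
      exact_mod_cast hca
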